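/- arXiv:2503.08595 — 4 statements merged into one kernel-verified Lean document; each statement's English description precedes it below -/
import Mathlib

section
/- Let ν ≥ 3 be odd. For the cycle graph C_ν with vertices ℤ/νℤ, let P_μ denote the orthogonal projection onto the eigenspace of the adjacency matrix for eigenvalue μ, and define d(p,q) = ∑_μ |P_μ(p,q)|², the sum over distinct eigenvalues μ. Then d(p,p) = (2ν−1)/ν² and d(p,q) = (ν−1)/ν² for all q ≠ p. -/
open Finset
open Real
open scoped Matrix

lemma cos_sum_zero (ν : ℕ) (hν : 0 < ν) (v : ℤ) (hv : ¬ ((ν:ℤ) ∣ v)) :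
    ∑ r ∈ Finset.range ν, Real.cos (2 * π / ν * r * v) = 0 := by
  have hν' : (ν:ℂ) ≠ 0 := by exact_mod_cast hν.ne'
  have hζν : (Complex.exp (2 * π / ν * v * Complex.I)) ^ ν = 1 := by
    rw [← Complex.exp_nat_mul]
    have : (ν:ℂ) * (2 * π / ν * v * Complex.I) = (v:ℂ) * (2 * π * Complex.I) := by
      field_simp
    rw [this, Complex.exp_int_mul_two_pi_mul_I]
  have hζ1 : Complex.exp (2 * π / ν * v * Complex.I) ≠ 1 := by
    intro hcon
    rw [Complex.exp_eq_one_iff] at hcon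
    obtain ⟨n, hn⟩ := hcon
    apply hv
    have h2 : ((2 * Real.pi / ν * v : ℝ) : ℂ) = ((n * (2*π) : ℝ):ℂ) := by
      push_cast
      have h := hn
      have h' : (2 * ↑π / ↑ν * ↑v : ℂ) * Complex.I = ((n:ℂ) * (2 * ↑π)) * Complex.I := by
        rw [h]; ring
      have := mul_right_cancel₀ Complex.I_ne_zero h'
      rw [this]
    have h3 : (2 * Real.pi / ν * v : ℝ) = n * (2*π) := by exact_mod_cast h2
    have hπ : Real.pi ≠ 0 := Real.pi_ne_zero
    have hν'' : (ν:ℝ) ≠ 0 := by exact_mod_cast hν.ne'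
    have hveq : (v:ℝ) = n * ν := by
      field_simp at h3
      nlinarith [h3, Real.pi_pos]
    have hz : v = n * ν := by exact_mod_cast hveq
    exact ⟨n, by rw [hz]; ring⟩
  have hgeom : ∑ r ∈ Finset.range ν, (Complex.exp (2 * π / ν * v * Complex.I)) ^ r = 0 := by
    rw [geom_sum_eq hζ1, hζν]
    simp
  have h0 := congrArg Complex.re hgeom
  rw [Complex.re_sum, Complex.zero_re] at h0
  rw [← h0]
  apply Finset.sum_congr rfl
  intro r _
  rw [← Complex.exp_nat_mul]
  have harg : (r:ℂ) * (2 * π / ν * v * Complex.I) = ((2 * π / ν * r * v : ℝ) : ℂ) * Complex.I := by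
    push_cast; ring
  rw [harg, Complex.exp_ofReal_mul_I_re]

lemma cos_half_sum (ν h : ℕ) (hh : ν = 2*h+1) (v : ℤ) (hv : ¬ ((ν:ℤ) ∣ v))
    (hfull : ∑ r ∈ Finset.range ν, Real.cos (2 * π / ν * r * v) = 0) :
    ∑ r ∈ Finset.range (h+1), Real.cos (2 * π / ν * r * v) = 1/2 := by
  set f : ℕ → ℝ := fun r => Real.cos (2 * π / ν * r * v) with hf
  have hsplit : ∑ r ∈ Finset.range ν, f r
      = ∑ r ∈ Finset.range (h+1), f r + ∑ r ∈ Finset.Ico (h+1) ν, f r := by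
    rw [Finset.range_eq_Ico, ← Finset.sum_Ico_consecutive f (Nat.zero_le (h+1)) (by omega : h+1 ≤ ν), ← Finset.range_eq_Ico]
  have hrefl : ∑ r ∈ Finset.Ico (h+1) ν, f r = ∑ r ∈ Finset.Ico 1 (h+1), f r := by
    apply Finset.sum_nbij' (fun r => ν - r) (fun r => ν - r)
    · intro a ha; simp only [Finset.mem_Ico] at *; omega
    · intro a ha; simp only [Finset.mem_Ico] at *; omega
    · intro a ha; simp only [Finset.mem_Ico] at ha; omega
    · intro a ha; simp only [Finset.mem_Ico] at ha; omega
    · intro a ha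
      simp only [Finset.mem_Ico] at ha
      simp only [hf]
      have hcast : ((ν - a : ℕ) : ℝ) = (ν : ℝ) - a := by
        have : a ≤ ν := by omega
        push_cast [this]; ring
      rw [hcast]
      have hν0 : (ν:ℝ) ≠ 0 := Nat.cast_ne_zero.mpr (by omega)
      have harg : 2 * π / ν * ((ν:ℝ) - a) * v = -(2 * π / ν * a * v) + (v : ℤ) * (2*π) := by
        field_simp; ring
      rw [harg, Real.cos_add_int_mul_two_pi, Real.cos_neg]
  have hlow : ∑ r ∈ Finset.Ico 1 (h+1), f r = (∑ r ∈ Finset.range (h+1), f r) - 1 := by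
    rw [Finset.range_eq_Ico, ← Finset.sum_Ico_consecutive f (Nat.zero_le 1) (by omega : 1 ≤ h+1)]
    have : ∑ r ∈ Finset.Ico 0 1, f r = 1 := by
      simp [hf]
    rw [this]; ring
  rw [hsplit, hrefl, hlow] at hfull
  linarith

noncomputable def cycE (ν : ℕ) (r : ℕ) (z : ZMod ν) : ℝ :=
  Real.cos (2 * π / ν * r * (z.val : ℝ))

lemma cycE_int (ν : ℕ) [NeZero ν] (r : ℕ) (t : ℤ) :
    cycE ν r ((t : ZMod ν)) = Real.cos (2 * π / ν * r * (t : ℝ)) := by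
  unfold cycE
  have hval : (((t : ZMod ν)).val : ℤ) = t % ν := ZMod.val_intCast t
  have hdecomp : (((t : ZMod ν)).val : ℤ) = t - ν * (t / ν) := by
    rw [hval, Int.emod_def]
  have hcast : (((t : ZMod ν)).val : ℝ) = (t : ℝ) - ν * ((t / ν : ℤ) : ℝ) := by
    exact_mod_cast congrArg (Int.cast : ℤ → ℝ) hdecomp
  rw [hcast]
  have hν0 : (ν:ℝ) ≠ 0 := Nat.cast_ne_zero.mpr (NeZero.ne ν)
  have : 2 * π / ν * r * ((t:ℝ) - ν * ((t / ν : ℤ) : ℝ))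
      = 2 * π / ν * r * t - ((r * (t/ν) : ℤ) : ℝ) * (2 * π) := by
    field_simp; push_cast; ring
  rw [this, Real.cos_sub_int_mul_two_pi]

noncomputable def cycQ (ν : ℕ) (r : ℕ) : Matrix (ZMod ν) (ZMod ν) ℝ :=
  Matrix.of fun p q => (if r = 0 then 1 else 2) / ν * cycE ν r (p - q)

lemma cycE_neg (ν : ℕ) [NeZero ν] (r : ℕ) (z : ZMod ν) : cycE ν r (-z) = cycE ν r z := by
  have h1 : z = ((z.val : ℤ) : ZMod ν) := by
    push_cast
    rw [ZMod.natCast_val, ZMod.cast_id]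
  have h2 : -z = ((-(z.val : ℤ) : ℤ) : ZMod ν) := by exact_mod_cast congrArg Neg.neg h1
  rw [h2, cycE_int]
  nth_rewrite 2 [h1]
  rw [cycE_int]
  push_cast
  rw [show 2 * π / ν * r * -(z.val:ℝ) = -(2 * π / ν * r * (z.val:ℝ)) by ring, Real.cos_neg]

lemma cycQ_symm (ν : ℕ) [NeZero ν] (r : ℕ) : (cycQ ν r).IsSymm := by
  ext p q
  simp only [Matrix.transpose_apply, cycQ, Matrix.of_apply]
  rw [show p - q = -(q - p) by ring, cycE_neg]

lemma zmod_intCast_val (ν : ℕ) [NeZero ν] (z : ZMod ν) : z = ((z.val : ℤ) : ZMod ν) := by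
  push_cast
  rw [ZMod.natCast_val, ZMod.cast_id]

lemma zmod_ndvd_val (ν : ℕ) [NeZero ν] (z : ZMod ν) (hz : z ≠ 0) : ¬ ((ν:ℤ) ∣ (z.val : ℤ)) := by
  have h1 : z.val ≠ 0 := fun h => hz ((ZMod.val_eq_zero z).mp h)
  have h2 : z.val < ν := ZMod.val_lt z
  intro ⟨c, hc⟩
  have hν1 : (1:ℤ) ≤ ν := by exact_mod_cast Nat.one_le_iff_ne_zero.mpr (NeZero.ne ν)
  have hb1 : (1:ℤ) ≤ ν * c := by omega
  have hb2 : (ν:ℤ) * c < ν := by omega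
  have hc1 : 1 ≤ c := by nlinarith
  nlinarith

lemma cycQ_eig (ν : ℕ) [NeZero ν] (hν : 3 ≤ ν) (hodd : Odd ν)
    (A : Matrix (ZMod ν) (ZMod ν) ℝ)
    (hA : ∀ x y : ZMod ν, A x y = if x - y = 1 ∨ y - x = 1 then 1 else 0) (r : ℕ) :
    A * cycQ ν r = (2 * Real.cos (2 * π / ν * r)) • cycQ ν r := by
  have h2ne : (1 : ZMod ν) ≠ -1 := by
    intro hcon
    have h20 : ((2:ℕ) : ZMod ν) = 0 := by push_cast; linear_combination hcon
    rw [ZMod.natCast_eq_zero_iff] at h20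
    exact absurd (Nat.le_of_dvd (by norm_num) h20) (by omega)
  ext p q
  have hne : (p - 1 : ZMod ν) ≠ p + 1 := fun hcon => h2ne (by linear_combination -hcon)
  have hentry : ∀ x, A p x * cycQ ν r x q
      = (if x = p - 1 then cycQ ν r x q else 0) + (if x = p + 1 then cycQ ν r x q else 0) := by
    intro x
    rw [hA]
    have e1 : p - x = 1 ↔ x = p - 1 := by constructor <;> intro hh <;> linear_combination -hh
    have e2 : x - p = 1 ↔ x = p + 1 := by constructor <;> intro hh <;> linear_combination hh
    by_cases hx1 : x = p - 1 <;> by_cases hx2 : x = p + 1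
    · exact absurd (hx1 ▸ hx2) hne
    · simp [e1, e2, hx1, hx2, hne]
    · simp [e1, e2, hx1, hx2, hne.symm]
    · simp [e1, e2, hx1, hx2, hne]
  rw [Matrix.mul_apply]
  simp only [hentry]
  rw [Finset.sum_add_distrib, Finset.sum_ite_eq' Finset.univ (p-1), Finset.sum_ite_eq' Finset.univ (p+1)]
  simp only [Finset.mem_univ, if_true]
  -- now: cycQ ν r (p-1) q + cycQ ν r (p+1) q = (2 cos θr) * cycQ ν r p q
  obtain ⟨v, hpq⟩ : ∃ v : ℤ, p - q = ((v:ℤ) : ZMod ν) := ⟨_, zmod_intCast_val ν (p-q)⟩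
  have harg1 : (p - 1 : ZMod ν) - q = ((v - 1 : ℤ) : ZMod ν) := by
    rw [Int.cast_sub, ← hpq]; push_cast; ring
  have harg2 : (p + 1 : ZMod ν) - q = ((v + 1 : ℤ) : ZMod ν) := by
    rw [Int.cast_add, ← hpq]; push_cast; ring
  simp only [Matrix.smul_apply, cycQ, Matrix.of_apply, smul_eq_mul]
  rw [harg1, harg2, hpq, cycE_int, cycE_int, cycE_int]
  set t : ℝ := ((v:ℤ) : ℝ)
  push_cast
  rw [show 2 * π / ν * r * (t - 1) = 2 * π / ν * r * t - 2 * π / ν * r by ring]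
  rw [show 2 * π / ν * r * (t + 1) = 2 * π / ν * r * t + 2 * π / ν * r by ring]
  rw [Real.cos_sub, Real.cos_add]
  ring

lemma cycE_zero (ν : ℕ) (r : ℕ) : cycE ν r (0 : ZMod ν) = 1 := by
  unfold cycE
  simp [ZMod.val_zero]

lemma cycE_r0 (ν : ℕ) (z : ZMod ν) : cycE ν 0 z = 1 := by
  simp [cycE]

lemma cycQ_sum (ν h : ℕ) [NeZero ν] (hh : ν = 2*h+1) :
    ∑ r ∈ Finset.range (h+1), cycQ ν r = 1 := by
  funext p q
  have hν0 : (ν:ℝ) ≠ 0 := Nat.cast_ne_zero.mpr (NeZero.ne ν)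
  have happ : (∑ r ∈ Finset.range (h+1), cycQ ν r) p q
      = ∑ r ∈ Finset.range (h+1), cycQ ν r p q := by
    rw [Matrix.sum_apply]
  rw [happ]
  have hterm : ∀ r ∈ Finset.range (h+1),
      cycQ ν r p q = 2 / ν * cycE ν r (p - q) - (if r = 0 then (1:ℝ)/ν else 0) := by
    intro r _
    simp only [cycQ, Matrix.of_apply]
    by_cases hr : r = 0
    · subst hr; rw [cycE_r0]; simp; ring
    · simp [hr]
  rw [Finset.sum_congr rfl hterm, Finset.sum_sub_distrib, Finset.sum_ite_eq' (Finset.range (h+1)) 0]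
  simp only [Finset.mem_range, Nat.succ_pos, if_true, Nat.zero_lt_succ]
  rw [← Finset.mul_sum]
  by_cases hpq : p = q
  · subst hpq
    simp only [sub_self, cycE_zero]
    rw [Finset.sum_const, Finset.card_range]
    have h1 : (1 : Matrix (ZMod ν) (ZMod ν) ℝ) p p = 1 := Matrix.one_apply_eq p
    rw [h1]
    push_cast [hh]
    field_simp
    ring
  · have hz : p - q ≠ 0 := sub_ne_zero.mpr hpq
    have hdvd := zmod_ndvd_val ν (p - q) hz
    have hes : ∀ r : ℕ, cycE ν r (p - q) = Real.cos (2 * π / ν * r * (((p-q).val : ℤ) : ℝ)) := by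
      intro r
      nth_rewrite 1 [zmod_intCast_val ν (p - q)]
      rw [cycE_int]
    have hsum : ∑ r ∈ Finset.range (h+1), cycE ν r (p - q) = 1/2 := by
      rw [Finset.sum_congr rfl (fun r _ => hes r)]
      exact cos_half_sum ν h hh _ hdvd (cos_sum_zero ν (by omega) _ hdvd)
    rw [hsum]
    have h0 : (1 : Matrix (ZMod ν) (ZMod ν) ℝ) p q = 0 := Matrix.one_apply_ne hpq
    rw [h0]
    field_simp
    ring

lemma ndvd_two_mul (ν : ℕ) (hodd : Odd ν) (v : ℤ) (hv : ¬ ((ν:ℤ) ∣ v)) :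
    ¬ ((ν:ℤ) ∣ 2 * v) := by
  intro hdvd
  obtain ⟨c, hc⟩ := hdvd
  have hoν : Odd (ν:ℤ) := by exact_mod_cast hodd
  have hec : Even c := by
    rcases Int.even_or_odd c with he | ho
    · exact he
    · exfalso
      have hoc : Odd ((ν:ℤ)*c) := hoν.mul ho
      rw [← hc] at hoc
      exact (Int.not_odd_iff_even.mpr ⟨v, by ring⟩) hoc
  obtain ⟨c', rfl⟩ := hec
  exact hv ⟨c', by linarith⟩

lemma cycQ_sq_sum (ν h : ℕ) [NeZero ν] (hh : ν = 2*h+1) (hodd : Odd ν) (p q : ZMod ν) :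
    ∑ r ∈ Finset.range (h+1), (cycQ ν r p q)^2
      = if p = q then (2*ν-1)/(ν:ℝ)^2 else ((ν:ℝ)-1)/(ν:ℝ)^2 := by
  have hν0 : (ν:ℝ) ≠ 0 := Nat.cast_ne_zero.mpr (NeZero.ne ν)
  have hterm : ∀ r ∈ Finset.range (h+1),
      (cycQ ν r p q)^2 = 4/(ν:ℝ)^2 * (cycE ν r (p - q))^2 - (if r = 0 then (3:ℝ)/ν^2 else 0) := by
    intro r _
    simp only [cycQ, Matrix.of_apply]
    by_cases hr : r = 0
    · subst hr; rw [cycE_r0]; simp; ring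
    · simp only [hr, if_false]; ring
  rw [Finset.sum_congr rfl hterm, Finset.sum_sub_distrib,
    Finset.sum_ite_eq' (Finset.range (h+1)) 0]
  simp only [Finset.mem_range, Nat.zero_lt_succ, if_true]
  rw [← Finset.mul_sum]
  by_cases hpq : p = q
  · subst hpq
    simp only [sub_self, cycE_zero, one_pow, if_true]
    rw [Finset.sum_const, Finset.card_range]
    push_cast [hh]
    field_simp
    ring
  · simp only [hpq, if_false]
    have hz : p - q ≠ 0 := sub_ne_zero.mpr hpq
    have hdvd := zmod_ndvd_val ν (p - q) hz
    have hdvd2 : ¬ ((ν:ℤ) ∣ 2 * ((p - q).val : ℤ)) := ndvd_two_mul ν hodd _ hdvd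
    have hsq : ∀ r : ℕ, (cycE ν r (p - q))^2
        = 1/2 + Real.cos (2 * π / ν * r * ((2 * ((p - q).val : ℤ) : ℤ) : ℝ)) / 2 := by
      intro r
      nth_rewrite 1 [zmod_intCast_val ν (p - q)]
      rw [cycE_int, Real.cos_sq]
      push_cast
      ring_nf
    have hsum2 : ∑ r ∈ Finset.range (h+1), Real.cos (2 * π / ν * r * ((2 * ((p - q).val : ℤ) : ℤ) : ℝ)) = 1/2 :=
      cos_half_sum ν h hh _ hdvd2 (cos_sum_zero ν (by omega) _ hdvd2)
    rw [Finset.sum_congr rfl (fun r _ => hsq r), Finset.sum_add_distrib,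
      Finset.sum_const, Finset.card_range, ← Finset.sum_div, hsum2]
    push_cast [hh]
    field_simp
    ring

lemma lam_inj (ν h : ℕ) (hh : ν = 2*h+1) {r s : ℕ} (hr : r ≤ h) (hs : s ≤ h)
    (heq : 2 * Real.cos (2 * π / ν * r) = 2 * Real.cos (2 * π / ν * s)) : r = s := by
  have hν0 : (0:ℝ) < ν := by exact_mod_cast Nat.pos_of_ne_zero (by omega)
  have hπ := Real.pi_pos
  have hmem : ∀ t : ℕ, t ≤ h → 2 * π / ν * t ∈ Set.Icc 0 π := by
    intro t ht
    constructor
    · positivity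
    · rw [div_mul_eq_mul_div, div_le_iff₀ hν0]
      have h1 : (t:ℝ) ≤ h := by exact_mod_cast ht
      have h2 : (ν:ℝ) = 2*h+1 := by exact_mod_cast hh
      nlinarith
  have := Real.injOn_cos (hmem r hr) (hmem s hs) (by linarith)
  have hne : 2 * π / ν ≠ 0 := by positivity
  have hrs : (r:ℝ) = s := mul_left_cancel₀ hne this
  exact_mod_cast hrs


/-- Limiting weights for the odd cycle `C_ν`: given the spectral decomposition of the
adjacency matrix (a family of mutually orthogonal symmetric projections `P i` summing to
the identity, with distinct eigenvalues `μ i`), and `d p q = ∑ i |P i (p,q)|²`, we have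
`d p p = (2ν-1)/ν²` and `d p q = (ν-1)/ν²` for `q ≠ p`. -/
theorem cycle_odd_limit (ν : ℕ) [NeZero ν] (hν : 3 ≤ ν) (hodd : Odd ν)
    (A : Matrix (ZMod ν) (ZMod ν) ℝ)
    (hA : ∀ x y : ZMod ν, A x y = if x - y = 1 ∨ y - x = 1 then 1 else 0)
    (k : ℕ) (μ : Fin k → ℝ) (P : Fin k → Matrix (ZMod ν) (ZMod ν) ℝ)
    (hμ : Function.Injective μ)
    (hsym : ∀ i, (P i).IsSymm)
    (hproj : ∀ i, P i * P i = P i)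
    (horth : ∀ i j, i ≠ j → P i * P j = 0)
    (hsum : ∑ i, P i = 1)
    (heig : ∀ i, A * P i = μ i • P i)
    (d : ZMod ν → ZMod ν → ℝ)
    (hd : ∀ p q, d p q = ∑ i, (P i p q) ^ 2) :
    ∀ p q : ZMod ν,
      d p p = (2 * ν - 1) / ν ^ 2 ∧ (q ≠ p → d p q = (ν - 1) / ν ^ 2) := by
  obtain ⟨h, hh⟩ : ∃ h, ν = 2*h+1 := by
    obtain ⟨m, hm⟩ := hodd; exact ⟨m, by omega⟩
  -- notation
  set lam : Fin (h+1) → ℝ := fun r => 2 * Real.cos (2 * π / ν * (r:ℕ)) with hlam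
  set Q : Fin (h+1) → Matrix (ZMod ν) (ZMod ν) ℝ := fun r => cycQ ν r with hQ
  have hlaminj : Function.Injective lam := by
    intro r s hrs
    exact Fin.ext (lam_inj ν h hh (by omega) (by omega) hrs)
  have hQsum : ∑ r, Q r = 1 := by
    rw [hQ]
    rw [Fin.sum_univ_eq_sum_range (fun r => cycQ ν r) (h+1)]
    exact cycQ_sum ν h hh
  have hQeig : ∀ r, A * Q r = lam r • Q r := fun r => cycQ_eig ν hν hodd A hA r
  have hAsymm : A.IsSymm := by
    ext p q
    rw [Matrix.transpose_apply, hA, hA]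
    exact if_congr or_comm rfl rfl
  have hPA : ∀ i, P i * A = μ i • P i := by
    intro i
    have ht : (P i * A)ᵀ = μ i • P i := by
      rw [Matrix.transpose_mul, hAsymm.eq, (hsym i).eq, heig i]
    calc P i * A = ((P i * A)ᵀ)ᵀ := by rw [Matrix.transpose_transpose]
    _ = (μ i • P i)ᵀ := by rw [ht]
    _ = μ i • (P i)ᵀ := by rw [Matrix.transpose_smul]
    _ = μ i • P i := by rw [(hsym i).eq]
  have hcross : ∀ (i : Fin k) (r : Fin (h+1)), μ i ≠ lam r → P i * Q r = 0 := by
    intro i r hne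
    have h1 : (P i * A) * Q r = μ i • (P i * Q r) := by
      rw [hPA i, Matrix.smul_mul]
    have h2 : P i * (A * Q r) = lam r • (P i * Q r) := by
      rw [hQeig r, Matrix.mul_smul]
    rw [mul_assoc] at h1
    have h3 : (μ i - lam r) • (P i * Q r) = 0 := by
      rw [sub_smul, h1.symm, h2.symm]
      exact sub_self _
    have h4 := smul_eq_zero.mp h3
    rcases h4 with h4 | h4
    · exact absurd (sub_eq_zero.mp h4) hne
    · exact h4
  have hQsymm : ∀ r : Fin (h+1), (Q r).IsSymm := fun r => cycQ_symm ν r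
  have hcross' : ∀ (i : Fin k) (r : Fin (h+1)), μ i ≠ lam r → Q r * P i = 0 := by
    intro i r hne
    have := congrArg Matrix.transpose (hcross i r hne)
    rw [Matrix.transpose_mul, (hsym i).eq, (hQsymm r).eq, Matrix.transpose_zero] at this
    exact this
  have hQne : ∀ r : Fin (h+1), Q r ≠ 0 := by
    intro r hcon
    have hent := congrFun (congrFun hcon 0) 0
    simp only [hQ, cycQ, Matrix.of_apply, Matrix.zero_apply, sub_self, cycE_zero, mul_one] at hent
    have hν0 : (ν:ℝ) ≠ 0 := Nat.cast_ne_zero.mpr (NeZero.ne ν)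
    by_cases hr : (r:ℕ) = 0 <;> simp [hr] at hent <;> exact NeZero.ne ν hent
  have hexists : ∀ r : Fin (h+1), ∃ i, μ i = lam r := by
    intro r
    by_contra hcon
    push_neg at hcon
    apply hQne r
    calc Q r = Q r * 1 := by rw [mul_one]
    _ = Q r * ∑ i, P i := by rw [hsum]
    _ = ∑ i, Q r * P i := by rw [Finset.mul_sum]
    _ = 0 := Finset.sum_eq_zero (fun i _ => hcross' i r (hcon i))
  choose ι hι using hexists
  have hιinj : Function.Injective ι := by
    intro r s hrs
    apply hlaminj
    rw [← hι r, ← hι s, hrs]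
  have hPQ : ∀ r, P (ι r) = Q r := by
    intro r
    have step1 : P (ι r) = P (ι r) * Q r := by
      calc P (ι r) = P (ι r) * 1 := by rw [mul_one]
      _ = P (ι r) * ∑ s, Q s := by rw [hQsum]
      _ = ∑ s, P (ι r) * Q s := by rw [Finset.mul_sum]
      _ = P (ι r) * Q r := by
          apply Finset.sum_eq_single
          · intro s _ hs
            apply hcross
            rw [hι r]
            exact fun hc => hs (hlaminj hc).symm
          · intro hc; exact absurd (Finset.mem_univ r) hc
    have step2 : Q r = Q r * P (ι r) := by
      calc Q r = Q r * 1 := by rw [mul_one]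
      _ = Q r * ∑ i, P i := by rw [hsum]
      _ = ∑ i, Q r * P i := by rw [Finset.mul_sum]
      _ = Q r * P (ι r) := by
          apply Finset.sum_eq_single
          · intro i _ hi
            apply hcross'
            intro hc
            exact hi (hμ (by rw [hc, ← hι r]))
          · intro hc; exact absurd (Finset.mem_univ (ι r)) hc
    calc P (ι r) = P (ι r) * Q r := step1
    _ = ((P (ι r) * Q r))ᵀᵀ := by rw [Matrix.transpose_transpose]
    _ = ((Q r)ᵀ * (P (ι r))ᵀ)ᵀ := by rw [Matrix.transpose_mul]
    _ = (Q r * P (ι r))ᵀ := by rw [(hsym (ι r)).eq, (hQsymm r).eq]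
    _ = (Q r)ᵀ := by rw [← step2]
    _ = Q r := (hQsymm r).eq
  have hPzero : ∀ i : Fin k, (∀ r, ι r ≠ i) → P i = 0 := by
    intro i hi
    calc P i = P i * 1 := by rw [mul_one]
    _ = P i * ∑ s, Q s := by rw [hQsum]
    _ = ∑ s, P i * Q s := by rw [Finset.mul_sum]
    _ = 0 := by
        apply Finset.sum_eq_zero
        intro s _
        apply hcross
        intro hc
        exact hi s (hμ (by rw [hc, ← hι s]))
  -- main computation
  have hkey : ∀ p q : ZMod ν, d p q
      = if p = q then (2*(ν:ℝ)-1)/(ν:ℝ)^2 else ((ν:ℝ)-1)/(ν:ℝ)^2 := by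
    intro p q
    rw [hd]
    have h1 : ∑ i, (P i p q)^2 = ∑ i ∈ Finset.univ.image ι, (P i p q)^2 := by
      symm
      apply Finset.sum_subset (Finset.subset_univ _)
      intro i _ hi
      have : ∀ r, ι r ≠ i := by
        intro r hc
        exact hi (Finset.mem_image.mpr ⟨r, Finset.mem_univ r, hc⟩)
      rw [hPzero i this]
      simp
    have h2 : ∑ i ∈ Finset.univ.image ι, (P i p q)^2 = ∑ r, (P (ι r) p q)^2 :=
      Finset.sum_image (fun r _ s _ hrs => hιinj hrs)
    rw [h1, h2]
    have h3 : ∀ r, (P (ι r) p q)^2 = (cycQ ν (r:ℕ) p q)^2 := by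
      intro r
      rw [hPQ r]
    rw [Finset.sum_congr rfl (fun r _ => h3 r)]
    rw [Fin.sum_univ_eq_sum_range (fun r => (cycQ ν r p q)^2) (h+1)]
    exact cycQ_sq_sum ν h hh hodd p q
  intro p q
  constructor
  · rw [hkey p p]
    simp
  · intro hqp
    rw [hkey p q]
    have hne : p ≠ q := fun hc => hqp hc.symm
    simp [hne]
end

section
/- Let ν ≥ 4 be even. For the cycle graph C_ν with vertices ℤ/νℤ and d(p,q) = ∑_μ |P_μ(p,q)|² (sum over distinct adjacency eigenvalues μ, P_μ the spectral projections), we have d(p,p) = d(p, p+ν/2) = (2/ν)(1 − 1/ν), and d(p,q) = (1/ν)(1 − 2/ν) for all other q. -/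
open Finset

section CycleAux
set_option linter.unusedSectionVars false

noncomputable def zet (ν : ℕ) : ℂ := Complex.exp (2 * Real.pi * Complex.I / ν)

noncomputable def chi (ν : ℕ) (x : ZMod ν) : ℂ := zet ν ^ x.val

variable {ν : ℕ} [NeZero ν]

lemma prim : IsPrimitiveRoot (zet ν) ν := Complex.isPrimitiveRoot_exp ν (NeZero.ne ν)

lemma zet_pow_nu : zet ν ^ ν = 1 := prim.pow_eq_one

lemma zet_pow_mod (n : ℕ) : zet ν ^ (n % ν) = zet ν ^ n := by
  conv_rhs => rw [← Nat.div_add_mod n ν]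
  rw [pow_add, pow_mul, zet_pow_nu, one_pow, one_mul]

lemma chi_zero : chi ν 0 = 1 := by simp [chi]

lemma chi_add (a b : ZMod ν) : chi ν (a + b) = chi ν a * chi ν b := by
  unfold chi
  rw [ZMod.val_add, zet_pow_mod, pow_add]

lemma chi_ne_zero (a : ZMod ν) : chi ν a ≠ 0 :=
  pow_ne_zero _ (Complex.exp_ne_zero _)

lemma chi_eq_one_iff (a : ZMod ν) : chi ν a = 1 ↔ a = 0 := by
  constructor
  · intro h
    have hd : ν ∣ a.val := ((prim (ν := ν)).pow_eq_one_iff_dvd a.val).mp h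
    exact (ZMod.val_eq_zero a).mp (Nat.eq_zero_of_dvd_of_lt hd (ZMod.val_lt a))
  · rintro rfl; exact chi_zero

lemma chi_inj {a b : ZMod ν} (h : chi ν a = chi ν b) : a = b := by
  have h1 : chi ν (a - b) * chi ν b = chi ν a := by rw [← chi_add]; ring_nf
  have h2 : chi ν (a - b) = 1 := by
    have : chi ν (a - b) * chi ν b = 1 * chi ν b := by rw [h1, h, one_mul]
    exact mul_right_cancel₀ (chi_ne_zero b) this
  exact sub_eq_zero.mp ((chi_eq_one_iff (a - b)).mp h2)

lemma chi_mul_chi_neg (a : ZMod ν) : chi ν a * chi ν (-a) = 1 := by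
  rw [← chi_add, add_neg_cancel, chi_zero]

lemma chi_sum (t : ZMod ν) : ∑ j : ZMod ν, chi ν (j * t) = if t = 0 then (ν : ℂ) else 0 := by
  split_ifs with h
  · subst h; simp [chi_zero, ZMod.card]
  · have key : chi ν t * ∑ j : ZMod ν, chi ν (j * t) = ∑ j : ZMod ν, chi ν (j * t) := by
      rw [Finset.mul_sum]
      refine Fintype.sum_equiv (Equiv.addRight 1) _ _ (fun j => ?_)
      simp only [Equiv.coe_addRight]
      rw [add_mul, one_mul, chi_add, mul_comm]
    have h0 : (chi ν t - 1) * ∑ j : ZMod ν, chi ν (j * t) = 0 := by linear_combination key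
    rcases mul_eq_zero.mp h0 with h1 | h2
    · exact absurd ((chi_eq_one_iff t).mp (sub_eq_zero.mp h1)) h
    · exact h2

lemma half_lemma (hν : 4 ≤ ν) (heven : Even ν) (x : ZMod ν) :
    x + x = 0 ↔ x = 0 ∨ x = ((ν / 2 : ℕ) : ZMod ν) := by
  obtain ⟨m, hm⟩ := heven
  have hx : ((x.val : ℕ) : ZMod ν) = x := by simp [ZMod.natCast_val, ZMod.cast_id]
  constructor
  · intro h
    have h2 : ((x.val + x.val : ℕ) : ZMod ν) = 0 := by push_cast; rw [hx]; exact h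
    have hdvd : ν ∣ x.val + x.val := (ZMod.natCast_eq_zero_iff _ _).mp h2
    have hlt := ZMod.val_lt x
    obtain ⟨c, hc⟩ := hdvd
    have hcl : c < 2 := by
      by_contra hcl
      push_neg at hcl
      nlinarith
    interval_cases c
    · left
      have hv : x.val = 0 := by omega
      rw [← hx, hv]; simp
    · right
      have hv : x.val = ν / 2 := by omega
      rw [← hx, hv]
  · rintro (rfl | rfl)
    · simp
    · rw [← Nat.cast_add]
      have : ν / 2 + ν / 2 = ν := by omega
      rw [this, ZMod.natCast_self]

lemma half_ne_zero (hν : 4 ≤ ν) : ((ν / 2 : ℕ) : ZMod ν) ≠ 0 := by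
  intro h
  have h1 := (ZMod.natCast_eq_zero_iff _ _).mp h
  have h2 := Nat.le_of_dvd (by omega : 0 < ν / 2) h1
  omega

lemma sum_pair_ite {α β : Type*} [Fintype α] [DecidableEq α] [AddCommMonoid β]
    (f : α → β) (a b : α) :
    ∑ x : α, (if x = a ∨ x = b then f x else 0) = if a = b then f a else f a + f b := by
  have h1 : ∑ x : α, (if x = a ∨ x = b then f x else 0) = ∑ x ∈ ({a, b} : Finset α), f x := by
    rw [← Finset.sum_filter]
    congr 1
    ext x; simp
  rw [h1]
  by_cases hab : a = b
  · subst hab; simp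
  · rw [Finset.sum_pair hab, if_neg hab]

end CycleAux

/-- Limiting weights for the even cycle `C_ν`: with the spectral decomposition of the
adjacency matrix and `d p q = ∑ i |P i (p,q)|²`, we have
`d p p = d p (p + ν/2) = (2/ν)(1 - 1/ν)` and `d p q = (1/ν)(1 - 2/ν)` for all other `q`. -/
theorem cycle_even_limit (ν : ℕ) [NeZero ν] (hν : 4 ≤ ν) (heven : Even ν)
    (A : Matrix (ZMod ν) (ZMod ν) ℝ)
    (hA : ∀ x y : ZMod ν, A x y = if x - y = 1 ∨ y - x = 1 then 1 else 0)
    (k : ℕ) (μ : Fin k → ℝ) (P : Fin k → Matrix (ZMod ν) (ZMod ν) ℝ)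
    (hμ : Function.Injective μ)
    (hsym : ∀ i, (P i).IsSymm)
    (hproj : ∀ i, P i * P i = P i)
    (horth : ∀ i j, i ≠ j → P i * P j = 0)
    (hsum : ∑ i, P i = 1)
    (heig : ∀ i, A * P i = μ i • P i)
    (d : ZMod ν → ZMod ν → ℝ)
    (hd : ∀ p q, d p q = ∑ i, (P i p q) ^ 2) :
    ∀ p q : ZMod ν,
      ((q = p ∨ q = p + (ν / 2 : ℕ)) → d p q = (2 / ν) * (1 - 1 / ν)) ∧
      (¬(q = p ∨ q = p + (ν / 2 : ℕ)) → d p q = (1 / ν) * (1 - 2 / ν)) := by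
  classical
  have hνC : (ν : ℂ) ≠ 0 := Nat.cast_ne_zero.mpr (by omega)
  have hν2 : (2 : ZMod ν) ≠ 0 := by
    intro h
    have h' : ((2 : ℕ) : ZMod ν) = 0 := by exact_mod_cast h
    have h1 := (ZMod.natCast_eq_zero_iff _ _).mp h'
    have := Nat.le_of_dvd (by norm_num) h1
    omega
  set E : ZMod ν → Matrix (ZMod ν) (ZMod ν) ℂ :=
    fun j => Matrix.of (fun p q => chi ν (j * (p - q)) / ν) with hE
  set lam : ZMod ν → ℂ := fun j => chi ν j + chi ν (-j) with hlam
  set Ac : Matrix (ZMod ν) (ZMod ν) ℂ := A.map Complex.ofReal with hAc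
  set Pc : Fin k → Matrix (ZMod ν) (ZMod ν) ℂ :=
    fun i => (P i).map Complex.ofReal with hPc
  have hE_apply : ∀ j p q, E j p q = chi ν (j * (p - q)) / ν := fun _ _ _ => rfl
  -- sum of E's is the identity
  have hEone : ∑ j, E j = 1 := by
    ext p q
    rw [Matrix.sum_apply]
    simp only [hE_apply]
    rw [← Finset.sum_div]
    rw [chi_sum (p - q)]
    rw [Matrix.one_apply]
    by_cases h : p = q
    · rw [if_pos (sub_eq_zero.mpr h), if_pos h, div_self hνC]
    · rw [if_neg (fun hh => h (sub_eq_zero.mp hh)), if_neg h, zero_div]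
  -- E j * Ac = lam j • E j
  have hEA : ∀ j, E j * Ac = lam j • E j := by
    intro j
    ext p q
    rw [Matrix.mul_apply]
    have hAq : ∀ r : ZMod ν, (Ac r q) = (if r = 1 + q then 1 else 0) + (if r = q - 1 then 1 else 0) := by
      intro r
      have e1 : (r - q = 1) ↔ r = 1 + q := by
        constructor <;> intro h <;> linear_combination h
      have e2 : (q - r = 1) ↔ r = q - 1 := by
        constructor <;> intro h <;> linear_combination -h
      rw [hAc, Matrix.map_apply, hA r q]
      simp only [e1, e2]
      have hne : (1 : ZMod ν) + q ≠ q - 1 := fun hh => hν2 (by linear_combination hh)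
      have hne' : q - 1 ≠ (1 : ZMod ν) + q := fun hh => hν2 (by linear_combination -hh)
      by_cases h1 : r = 1 + q <;> by_cases h2 : r = q - 1
      · exfalso
        apply hν2
        rw [h1] at h2
        linear_combination h2
      · simp [h1, h2, hne]
      · simp [h1, h2, hne']
      · simp [h1, h2]
    calc ∑ r, E j p r * Ac r q
        = ∑ r, ((if r = 1 + q then E j p r else 0) + (if r = q - 1 then E j p r else 0)) := by
          refine Finset.sum_congr rfl (fun r _ => ?_)
          rw [hAq r]
          split_ifs <;> ring
      _ = E j p (1 + q) + E j p (q - 1) := by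
          rw [Finset.sum_add_distrib, Finset.sum_ite_eq' univ, Finset.sum_ite_eq' univ]
          simp
      _ = (lam j • E j) p q := by
          rw [Matrix.smul_apply, smul_eq_mul, hE_apply, hE_apply, hE_apply, hlam]
          have k1 : j * (p - (1 + q)) = j * (p - q) + (-j) := by ring
          have k2 : j * (p - (q - 1)) = j * (p - q) + j := by ring
          rw [k1, k2, chi_add, chi_add]
          field_simp
          ring
  -- complexified hypotheses
  have hAcP : ∀ i, Ac * Pc i = (μ i : ℂ) • Pc i := by
    intro i
    ext p q
    have hre : ∑ r, A p r * P i r q = μ i * P i p q := by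
      have := congrFun (congrFun (heig i) p) q
      simpa [Matrix.mul_apply, Matrix.smul_apply, smul_eq_mul] using this
    simp only [Matrix.mul_apply, hAc, hPc, Matrix.map_apply, Matrix.smul_apply, smul_eq_mul]
    exact_mod_cast congrArg (Complex.ofReal) hre
  have hsum_c : ∑ i, Pc i = 1 := by
    ext p q
    have := congrFun (congrFun hsum p) q
    simp only [Matrix.sum_apply, Matrix.one_apply, hPc, Matrix.map_apply] at this ⊢
    split_ifs at this ⊢ <;> exact_mod_cast this
  -- orthogonality of E against P with different eigenvalues
  have hEP0 : ∀ i j, (μ i : ℂ) ≠ lam j → E j * Pc i = 0 := by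
    intro i j hne
    have h1 : E j * (Ac * Pc i) = (μ i : ℂ) • (E j * Pc i) := by
      rw [hAcP i, Matrix.mul_smul]
    have h2 : E j * (Ac * Pc i) = lam j • (E j * Pc i) := by
      rw [← Matrix.mul_assoc, hEA j, Matrix.smul_mul]
    have h3 : (lam j - (μ i : ℂ)) • (E j * Pc i) = 0 := by
      rw [sub_smul, ← h2, ← h1, sub_self]
    rcases smul_eq_zero.mp h3 with h4 | h4
    · exact absurd (sub_eq_zero.mp h4).symm hne
    · exact h4
  -- every lam j is hit by some μ i
  have hex : ∀ j, ∃ i, (μ i : ℂ) = lam j := by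
    intro j
    by_contra hno
    push_neg at hno
    have h1 : E j = E j * 1 := (Matrix.mul_one _).symm
    rw [← hsum_c, Finset.mul_sum] at h1
    rw [Finset.sum_eq_zero (fun i _ => hEP0 i j (hno i))] at h1
    have h2 : E j 0 0 = 0 := by rw [h1]; rfl
    rw [hE_apply] at h2
    simp only [sub_self, mul_zero, chi_zero] at h2
    exact hνC ((div_eq_zero_iff.mp h2).resolve_left one_ne_zero)
  set c : Fin k → ZMod ν → ℂ := fun i j => if (μ i : ℂ) = lam j then 1 else 0 with hc
  have hcsum : ∀ j, ∑ i, c i j = 1 := by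
    intro j
    obtain ⟨i₀, hi₀⟩ := hex j
    rw [Finset.sum_eq_single i₀]
    · simp [hc, hi₀]
    · intro b _ hb
      rw [hc]
      refine if_neg (fun hEq => hb (hμ ?_))
      exact_mod_cast hEq.trans hi₀.symm
    · exact fun h => absurd (Finset.mem_univ i₀) h
  have hEP : ∀ i j, E j * Pc i = c i j • E j := by
    intro i j
    by_cases h : (μ i : ℂ) = lam j
    · have h1 : E j = ∑ i', E j * Pc i' := by
        rw [← Finset.mul_sum, hsum_c, Matrix.mul_one]
      rw [Finset.sum_eq_single i] at h1
      · rw [hc]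
        simp only [if_pos h, one_smul]
        exact h1.symm
      · intro b _ hb
        refine hEP0 b j (fun hEq => hb (hμ ?_))
        exact_mod_cast hEq.trans h.symm
      · exact fun hh => absurd (Finset.mem_univ i) hh
    · rw [hc]
      simp only [if_neg h, zero_smul]
      exact hEP0 i j h
  have hPdecomp : ∀ i p q, ((P i p q : ℝ) : ℂ) = ∑ j, c i j * E j p q := by
    intro i p q
    have h1 : Pc i = ∑ j, c i j • E j := by
      calc Pc i = 1 * Pc i := (Matrix.one_mul _).symm
        _ = (∑ j, E j) * Pc i := by rw [hEone]
        _ = ∑ j, E j * Pc i := Finset.sum_mul _ _ _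
        _ = ∑ j, c i j • E j := Finset.sum_congr rfl (fun j _ => hEP i j)
    have h2 : Pc i p q = ((P i p q : ℝ) : ℂ) := rfl
    rw [← h2, h1, Matrix.sum_apply]
    exact Finset.sum_congr rfl (fun j _ => by rw [Matrix.smul_apply, smul_eq_mul])
  have hlam_iff : ∀ j j', lam j = lam j' ↔ (j' = j ∨ j' = -j) := by
    intro j j'
    constructor
    · intro h
      have hx := chi_mul_chi_neg (ν := ν) j
      have hy := chi_mul_chi_neg (ν := ν) j'
      have hh : chi ν j + chi ν (-j) = chi ν j' + chi ν (-j') := h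
      have key : (chi ν j - chi ν j') * (chi ν j * chi ν j' - 1) = 0 := by
        linear_combination (chi ν j * chi ν j') * hh - chi ν j' * hx + chi ν j * hy
      rcases mul_eq_zero.mp key with h1 | h1
      · exact Or.inl (chi_inj (sub_eq_zero.mp h1)).symm
      · refine Or.inr ?_
        have h2 : chi ν (j + j') = 1 := by rw [chi_add]; exact sub_eq_zero.mp h1
        have h3 := (chi_eq_one_iff _).mp h2
        exact eq_neg_of_add_eq_zero_left (by linear_combination h3)
    · rintro (rfl | rfl)
      · rfl
      · rw [hlam]
        simp only [neg_neg]
        ring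
  have hcc : ∀ j j', ∑ i, c i j * c i j' = if j' = j ∨ j' = -j then 1 else 0 := by
    intro j j'
    by_cases h : lam j = lam j'
    · rw [if_pos ((hlam_iff j j').mp h)]
      have he : ∀ i, c i j * c i j' = c i j := by
        intro i
        rw [hc]
        simp only [← h]
        split_ifs <;> ring
      rw [Finset.sum_congr rfl (fun i _ => he i), hcsum j]
    · rw [if_neg (fun hor => h ((hlam_iff j j').mpr hor))]
      refine Finset.sum_eq_zero (fun i _ => ?_)
      rw [hc]
      simp only
      split_ifs with h1 h2
      · exact absurd (h1.symm.trans h2) h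
      · ring
      · ring
      · ring
  -- now the pointwise computation
  intro p q
  set t : ZMod ν := (p - q) + (p - q) with ht
  have main : (d p q : ℂ) = ((if t = 0 then (ν : ℂ) else 0) + ((ν : ℂ) - 2)) / (ν : ℂ) ^ 2 := by
    have step1 : (d p q : ℂ) = ∑ i, ((P i p q : ℝ) : ℂ) ^ 2 := by
      rw [hd]; push_cast; ring
    rw [step1]
    calc ∑ i, ((P i p q : ℝ) : ℂ) ^ 2
        = ∑ i, (∑ j, c i j * E j p q) * (∑ j', c i j' * E j' p q) := by
          refine Finset.sum_congr rfl (fun i _ => ?_)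
          rw [hPdecomp i p q, sq]
      _ = ∑ i, ∑ j, ∑ j', (c i j * E j p q) * (c i j' * E j' p q) := by
          refine Finset.sum_congr rfl (fun i _ => ?_)
          rw [Finset.sum_mul_sum]
      _ = ∑ j, ∑ j', (∑ i, c i j * c i j') * (E j p q * E j' p q) := by
          rw [Finset.sum_comm]
          refine Finset.sum_congr rfl (fun j _ => ?_)
          rw [Finset.sum_comm]
          refine Finset.sum_congr rfl (fun j' _ => ?_)
          rw [Finset.sum_mul]
          exact Finset.sum_congr rfl (fun i _ => by ring)
      _ = ∑ j, ∑ j', (if j' = j ∨ j' = -j then E j p q * E j' p q else 0) := by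
          refine Finset.sum_congr rfl (fun j _ => Finset.sum_congr rfl (fun j' _ => ?_))
          rw [hcc j j']
          split_ifs <;> ring
      _ = ∑ j, (if j = -j then E j p q * E j p q else E j p q * E j p q + E j p q * E (-j) p q) := by
          refine Finset.sum_congr rfl (fun j _ => ?_)
          exact sum_pair_ite (fun j' => E j p q * E j' p q) j (-j)
      _ = ∑ j, E j p q * E j p q + ∑ j, (if j = -j then 0 else E j p q * E (-j) p q) := by
          rw [← Finset.sum_add_distrib]
          refine Finset.sum_congr rfl (fun j _ => ?_)
          split_ifs <;> ring
      _ = ((if t = 0 then (ν : ℂ) else 0) + ((ν : ℂ) - 2)) / (ν : ℂ) ^ 2 := by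
          have S1 : ∑ j, E j p q * E j p q = (if t = 0 then (ν : ℂ) else 0) / (ν : ℂ) ^ 2 := by
            have he : ∀ j : ZMod ν, E j p q * E j p q = chi ν (j * t) / (ν : ℂ) ^ 2 := by
              intro j
              rw [hE_apply, div_mul_div_comm, ← chi_add]
              congr 1
              · congr 1; rw [ht]; ring
              · ring
            rw [Finset.sum_congr rfl (fun j _ => he j), ← Finset.sum_div, chi_sum t]
          have S2 : ∑ j, (if j = -j then (0:ℂ) else E j p q * E (-j) p q) = ((ν : ℂ) - 2) / (ν : ℂ) ^ 2 := by
            have he : ∀ j : ZMod ν, E j p q * E (-j) p q = 1 / (ν : ℂ) ^ 2 := by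
              intro j
              rw [hE_apply, hE_apply, div_mul_div_comm, ← chi_add]
              have h0 : j * (p - q) + -j * (p - q) = 0 := by ring
              rw [h0, chi_zero]
              congr 1
              ring
            have step : ∑ j, (if j = -j then (0:ℂ) else E j p q * E (-j) p q)
                = ∑ j : ZMod ν, ((1:ℂ) / (ν:ℂ)^2 - if j = -j then (1:ℂ)/(ν:ℂ)^2 else 0) := by
              refine Finset.sum_congr rfl (fun j _ => ?_)
              rw [he j]
              split_ifs <;> ring
            rw [step, Finset.sum_sub_distrib, Finset.sum_const, Finset.card_univ, ZMod.card,
              nsmul_eq_mul]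
            have hfil : ∑ j : ZMod ν, (if j = -j then (1:ℂ)/(ν:ℂ)^2 else 0)
                = 2 / (ν:ℂ)^2 := by
              rw [← Finset.sum_filter]
              have : Finset.univ.filter (fun j : ZMod ν => j = -j) = {0, ((ν/2 : ℕ) : ZMod ν)} := by
                ext x
                simp only [Finset.mem_filter, Finset.mem_univ, true_and, Finset.mem_insert,
                  Finset.mem_singleton]
                rw [eq_neg_iff_add_eq_zero, half_lemma hν heven x]
              rw [this, Finset.sum_pair (Ne.symm (half_ne_zero hν))]
              ring
            rw [hfil]
            ring
          rw [S1, S2, ← add_div]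
  have hcond : (t = 0) ↔ (q = p ∨ q = p + ((ν / 2 : ℕ) : ZMod ν)) := by
    have h2 : ((ν / 2 : ℕ) : ZMod ν) + ((ν / 2 : ℕ) : ZMod ν) = 0 :=
      (half_lemma hν heven _).mpr (Or.inr rfl)
    rw [ht, half_lemma hν heven (p - q)]
    constructor
    · rintro (h | h)
      · exact Or.inl (by linear_combination -h)
      · exact Or.inr (by linear_combination -h - h2)
    · rintro (rfl | rfl)
      · exact Or.inl (sub_self _)
      · exact Or.inr (by linear_combination -h2)
  constructor
  · intro h
    have h0 : t = 0 := hcond.mpr h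
    rw [if_pos h0] at main
    have goalC : (((2 / ν) * (1 - 1 / ν) : ℝ) : ℂ) = ((ν : ℂ) + ((ν : ℂ) - 2)) / (ν : ℂ) ^ 2 := by
      push_cast
      field_simp
      ring
    exact_mod_cast main.trans goalC.symm
  · intro h
    have h0 : t ≠ 0 := fun hh => h (hcond.mp hh)
    rw [if_neg h0] at main
    have goalC : (((1 / ν) * (1 - 2 / ν) : ℝ) : ℂ) = ((0 : ℂ) + ((ν : ℂ) - 2)) / (ν : ℂ) ^ 2 := by
      push_cast
      rw [zero_add, eq_div_iff (pow_ne_zero 2 hνC)]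
      field_simp
    exact_mod_cast main.trans goalC.symm
end

section
/- Let ν ≥ 2 and let P_ν be the path graph on vertices {1,…,ν}. Define d(p,q) = ∑_{s=1}^{ν} |w_s(p)|²|w_s(q)|² where w_s(ℓ) = √(2/(ν+1)) sin(πsℓ/(ν+1)) are the normalized eigenvectors of the adjacency matrix. Then d(p,q) = 2/(ν+1) if p = q = (ν+1)/2; d(p,q) = 3/(2(ν+1)) if either (p = q and p+q ≠ ν+1) or (p ≠ q and p+q = ν+1); and d(p,q) = 1/(ν+1) otherwise. -/
open Real Finset


lemma sum_cos_range (n : ℕ) (hn : 0 < n) (k : ℤ) :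
    ∑ s ∈ Finset.range n, Real.cos (2 * π * s * k / n) =
      if (n : ℤ) ∣ k then (n : ℝ) else 0 := by
  have hn' : (n : ℂ) ≠ 0 := by exact_mod_cast Nat.cast_ne_zero.mpr hn.ne'
  have hnr : (n : ℝ) ≠ 0 := by exact_mod_cast Nat.cast_ne_zero.mpr hn.ne'
  by_cases h : (n : ℤ) ∣ k
  · rw [if_pos h]
    have hc : ∀ s ∈ Finset.range n, Real.cos (2 * π * s * k / n) = 1 := by
      intro s _
      obtain ⟨m, hm⟩ := h
      rw [hm]
      push_cast
      rw [show 2 * π * (s : ℝ) * ((n : ℝ) * m) / n = ((s * m : ℤ) : ℝ) * (2 * π) by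
        push_cast; field_simp]
      exact Real.cos_int_mul_two_pi _
    rw [Finset.sum_congr rfl hc]
    simp
  · rw [if_neg h]
    obtain ⟨x, hx⟩ : ∃ x : ℂ, x = Complex.exp (2 * π * Complex.I * k / n) := ⟨_, rfl⟩
    have hπ : (2 : ℂ) * π * Complex.I ≠ 0 := by
      simp [Real.pi_ne_zero, Complex.I_ne_zero, Complex.ofReal_ne_zero]
    have hxne : x ≠ 1 := by
      rw [hx, Ne, Complex.exp_eq_one_iff]
      rintro ⟨m, hm⟩
      apply h
      have h4 : (2 * π * Complex.I) * (k : ℂ) = (2 * π * Complex.I) * (m * n) := by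
        field_simp at hm
        linear_combination (2 * π * Complex.I) * hm
      have h5 := mul_left_cancel₀ hπ h4
      exact ⟨m, by rw [mul_comm]; exact_mod_cast h5⟩
    have hxn : x ^ n = 1 := by
      rw [hx, ← Complex.exp_nat_mul]
      have h2 : (n : ℂ) * (2 * π * Complex.I * k / n) = k * (2 * π * Complex.I) := by
        field_simp
      rw [h2, Complex.exp_int_mul_two_pi_mul_I]
    have hsum : ∑ s ∈ Finset.range n, x ^ s = 0 := by
      rw [geom_sum_eq hxne, hxn]; simp
    have hre : ∀ s : ℕ, (x ^ s).re = Real.cos (2 * π * s * k / n) := by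
      intro s
      rw [hx, ← Complex.exp_nat_mul]
      have h3 : (s : ℂ) * (2 * π * Complex.I * k / n) = ((2 * π * s * k / n : ℝ) : ℂ) * Complex.I := by
        push_cast; ring
      rw [h3, Complex.exp_ofReal_mul_I_re]
    calc ∑ s ∈ Finset.range n, Real.cos (2 * π * s * k / n)
        = (∑ s ∈ Finset.range n, x ^ s).re := by
          rw [Complex.re_sum]; exact (Finset.sum_congr rfl fun s _ => (hre s).symm)
      _ = 0 := by rw [hsum]; rfl

lemma sum_cos_Icc (ν : ℕ) (k : ℤ) :
    ∑ s ∈ Finset.Icc 1 ν, Real.cos (2 * π * s * k / ((ν : ℝ) + 1)) =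
      (if ((ν : ℤ) + 1) ∣ k then ((ν : ℝ) + 1) else 0) - 1 := by
  have h := sum_cos_range (ν + 1) (Nat.succ_pos ν) k
  rw [Finset.range_eq_Ico, Finset.sum_eq_sum_Ico_succ_bot (Nat.succ_pos ν)] at h
  rw [Nat.succ_eq_add_one, Finset.Ico_add_one_right_eq_Icc] at h
  push_cast at h ⊢
  simp only [Nat.cast_zero, mul_zero, zero_mul, zero_div, Real.cos_zero] at h
  linarith [h]

lemma trig_id (a b N : ℝ) :
    (2/N * Real.sin a ^ 2) * (2/N * Real.sin b ^ 2) =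
      1/N^2 * (1 - Real.cos (2*a) - Real.cos (2*b)
        + (Real.cos (2*a - 2*b) + Real.cos (2*a + 2*b))/2) := by
  rw [Real.sin_sq_eq_half_sub a, Real.sin_sq_eq_half_sub b, Real.cos_sub, Real.cos_add]
  ring


/-- Limiting weights for the path graph `P_ν` on vertices `{1,…,ν}`:
with `w_s(ℓ) = √(2/(ν+1)) sin (π s ℓ/(ν+1))` the normalized eigenvectors and
`d p q = ∑ s |w_s(p)|² |w_s(q)|²`, the stated case distinction holds. -/
theorem path_limit (ν : ℕ) (hν : 2 ≤ ν)
    (w : ℕ → ℕ → ℝ)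
    (hw : ∀ s ℓ, w s ℓ = Real.sqrt (2 / (ν + 1)) * Real.sin (π * s * ℓ / (ν + 1)))
    (d : ℕ → ℕ → ℝ)
    (hd : ∀ p q, d p q = ∑ s ∈ Finset.Icc 1 ν, (w s p) ^ 2 * (w s q) ^ 2)
    (p q : ℕ) (hp : 1 ≤ p) (hp' : p ≤ ν) (hq : 1 ≤ q) (hq' : q ≤ ν) :
    (p = q ∧ p + q = ν + 1 → d p q = 2 / (ν + 1)) ∧
    ((p = q ∧ p + q ≠ ν + 1) ∨ (p ≠ q ∧ p + q = ν + 1) →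
      d p q = 3 / (2 * (ν + 1))) ∧
    (¬(p = q) ∧ ¬(p + q = ν + 1) → d p q = 1 / (ν + 1)) := by
  set N : ℝ := (ν : ℝ) + 1 with hNdef
  have hN0 : (0 : ℝ) < N := by positivity
  have hN : N ≠ 0 := hN0.ne'
  have hpos : (0 : ℝ) ≤ 2 / N := by positivity
  have hterm : ∀ s ∈ Finset.Icc 1 ν, (w s p) ^ 2 * (w s q) ^ 2 =
      1/N^2 * (1 - Real.cos (2 * π * s * ((p : ℤ) : ℝ) / N)
        - Real.cos (2 * π * s * ((q : ℤ) : ℝ) / N)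
        + (Real.cos (2 * π * s * (Int.cast ((p : ℤ) - (q : ℤ)) : ℝ) / N)
          + Real.cos (2 * π * s * (Int.cast ((p : ℤ) + (q : ℤ)) : ℝ) / N))/2) := by
    intro s _
    rw [hw, hw, mul_pow, mul_pow, Real.sq_sqrt hpos]
    rw [show (2 / N * Real.sin (π * s * p / N) ^ 2) * (2 / N * Real.sin (π * s * q / N) ^ 2)
        = (2/N * Real.sin (π * s * p / N) ^ 2) * (2/N * Real.sin (π * s * q / N) ^ 2) from rfl]
    rw [trig_id]
    have e1 : 2 * (π * s * p / N) = 2 * π * s * ((p : ℤ) : ℝ) / N := by push_cast; ring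
    have e2 : 2 * (π * s * q / N) = 2 * π * s * ((q : ℤ) : ℝ) / N := by push_cast; ring
    have e3 : 2 * (π * s * p / N) - 2 * (π * s * q / N)
        = 2 * π * s * (Int.cast ((p : ℤ) - (q : ℤ)) : ℝ) / N := by push_cast; ring
    have e4 : 2 * (π * s * p / N) + 2 * (π * s * q / N)
        = 2 * π * s * (Int.cast ((p : ℤ) + (q : ℤ)) : ℝ) / N := by push_cast; ring
    rw [e3, e4, e1, e2]
  have master : d p q = 1/N^2 * ((ν : ℝ)
      - ((if ((ν : ℤ) + 1) ∣ (p : ℤ) then N else 0) - 1)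
      - ((if ((ν : ℤ) + 1) ∣ (q : ℤ) then N else 0) - 1)
      + (((if ((ν : ℤ) + 1) ∣ ((p : ℤ) - (q : ℤ)) then N else 0) - 1)
        + ((if ((ν : ℤ) + 1) ∣ ((p : ℤ) + (q : ℤ)) then N else 0) - 1))/2) := by
    rw [hd, Finset.sum_congr rfl hterm, ← Finset.mul_sum]
    congr 1
    rw [Finset.sum_add_distrib, Finset.sum_sub_distrib, Finset.sum_sub_distrib,
      ← Finset.sum_div, Finset.sum_add_distrib, Finset.sum_const, Nat.card_Icc]
    rw [sum_cos_Icc, sum_cos_Icc, sum_cos_Icc, sum_cos_Icc]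
    simp [hNdef]
  have hdvd1 : ¬ ((ν : ℤ) + 1) ∣ (p : ℤ) := by
    intro h
    have := Int.le_of_dvd (by exact_mod_cast hp) h
    omega
  have hdvd2 : ¬ ((ν : ℤ) + 1) ∣ (q : ℤ) := by
    intro h
    have := Int.le_of_dvd (by exact_mod_cast hq) h
    omega
  have hdvd3 : ((ν : ℤ) + 1) ∣ ((p : ℤ) - (q : ℤ)) ↔ p = q := by
    constructor
    · intro h
      have := Int.eq_zero_of_abs_lt_dvd h (by rw [abs_lt]; constructor <;> push_cast <;> omega)
      omega
    · rintro rfl; simp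
  have hdvd4 : ((ν : ℤ) + 1) ∣ ((p : ℤ) + (q : ℤ)) ↔ p + q = ν + 1 := by
    constructor
    · intro h
      have h' : ((ν : ℤ) + 1) ∣ ((p : ℤ) + (q : ℤ) - ((ν : ℤ) + 1)) := h.sub dvd_rfl
      have := Int.eq_zero_of_abs_lt_dvd h' (by rw [abs_lt]; constructor <;> push_cast <;> omega)
      omega
    · intro h
      have : (p : ℤ) + (q : ℤ) = (ν : ℤ) + 1 := by exact_mod_cast h
      rw [this]
  rw [if_neg hdvd1, if_neg hdvd2] at master
  refine ⟨?_, ?_, ?_⟩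
  · rintro ⟨h1, h2⟩
    rw [if_pos (hdvd3.mpr h1), if_pos (hdvd4.mpr h2)] at master
    rw [master, hNdef]
    field_simp
    ring
  · rintro (⟨h1, h2⟩ | ⟨h1, h2⟩)
    · rw [if_pos (hdvd3.mpr h1), if_neg (fun hc => h2 (hdvd4.mp hc))] at master
      rw [master, hNdef]
      field_simp
      ring
    · rw [if_neg (fun hc => h1 (hdvd3.mp hc)), if_pos (hdvd4.mpr h2)] at master
      rw [master, hNdef]
      field_simp
      ring
  · rintro ⟨h1, h2⟩
    rw [if_neg (fun hc => h1 (hdvd3.mp hc)), if_neg (fun hc => h2 (hdvd4.mp hc))] at master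
    rw [master, hNdef]
    field_simp
    ring
end

section
/- Let ν ≥ 2 and let K_{ν,1} be the star graph on vertices {1,…,ν+1} with ν+1 the center. Define d(p,q) = |P_0(p,q)|² + |P_{√ν}(p,q)|² + |P_{−√ν}(p,q)|², where P_μ are the spectral projections of the adjacency matrix. Then for 1 ≤ p ≤ ν: d(p,p) = (ν−1)²/ν² + 1/(2ν²), d(p,ν+1) = 1/(2ν), and d(p,q) = 3/(2ν²) for 1 ≤ q ≤ ν with q ≠ p; moreover d(ν+1,ν+1) = 1/2. -/
open Real Finset

/-- Limiting weights for the star graph `K_{ν,1}` on vertices `{1,…,ν+1}` (indexed by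
`Fin (ν+1)`, the center being the last index `ν`): with `P₀, P₊, P₋` the spectral
projections of the adjacency matrix onto the eigenvalues `0, √ν, -√ν`, and
`d p q = |P₀(p,q)|² + |P₊(p,q)|² + |P₋(p,q)|²`, the stated values hold. -/
theorem star_limit (ν : ℕ) (hν : 2 ≤ ν)
    (A : Matrix (Fin (ν + 1)) (Fin (ν + 1)) ℝ)
    (hA : ∀ i j : Fin (ν + 1),
      A i j = if (i.val = ν ∧ j.val < ν) ∨ (j.val = ν ∧ i.val < ν) then 1 else 0)
    (P₀ Pp Pm : Matrix (Fin (ν + 1)) (Fin (ν + 1)) ℝ)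
    (hsym : P₀.IsSymm ∧ Pp.IsSymm ∧ Pm.IsSymm)
    (hproj : P₀ * P₀ = P₀ ∧ Pp * Pp = Pp ∧ Pm * Pm = Pm)
    (horth : P₀ * Pp = 0 ∧ P₀ * Pm = 0 ∧ Pp * Pm = 0)
    (hsum : P₀ + Pp + Pm = 1)
    (heig₀ : A * P₀ = 0)
    (heigp : A * Pp = Real.sqrt ν • Pp)
    (heigm : A * Pm = (-Real.sqrt ν) • Pm)
    (d : Fin (ν + 1) → Fin (ν + 1) → ℝ)
    (hd : ∀ p q, d p q = (P₀ p q) ^ 2 + (Pp p q) ^ 2 + (Pm p q) ^ 2) :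
    (∀ p q : Fin (ν + 1), p.val < ν →
      (q = p → d p q = (ν - 1) ^ 2 / ν ^ 2 + 1 / (2 * ν ^ 2)) ∧
      (q.val = ν → d p q = 1 / (2 * ν)) ∧
      (q.val < ν → q ≠ p → d p q = 3 / (2 * ν ^ 2))) ∧
    (∀ p q : Fin (ν + 1), p.val = ν → q.val = ν → d p q = 1 / 2) := by
  have hν0 : (0:ℝ) < (ν:ℝ) := by exact_mod_cast Nat.lt_of_lt_of_le (by norm_num) hν
  have hνne : (ν:ℝ) ≠ 0 := ne_of_gt hν0
  have hs : Real.sqrt ν * Real.sqrt ν = (ν:ℝ) := Real.mul_self_sqrt hν0.le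
  have hsne : Real.sqrt ν ≠ 0 := by positivity
  -- A = √ν • Pp - √ν • Pm
  have h1 : A = Real.sqrt ν • Pp - Real.sqrt ν • Pm := by
    calc A = A * (P₀ + Pp + Pm) := by rw [hsum, mul_one]
    _ = A * P₀ + A * Pp + A * Pm := by rw [mul_add, mul_add]
    _ = Real.sqrt ν • Pp - Real.sqrt ν • Pm := by
        rw [heig₀, heigp, heigm]; simp [neg_smul, sub_eq_add_neg]
  -- A * A = ν • Pp + ν • Pm
  have h2 : A * A = (ν:ℝ) • Pp + (ν:ℝ) • Pm := by
    calc A * A = A * (Real.sqrt ν • Pp - Real.sqrt ν • Pm) := by rw [← h1]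
    _ = Real.sqrt ν • (A * Pp) - Real.sqrt ν • (A * Pm) := by
        rw [mul_sub, Matrix.mul_smul, Matrix.mul_smul]
    _ = Real.sqrt ν • (Real.sqrt ν • Pp) - Real.sqrt ν • ((-Real.sqrt ν) • Pm) := by
        rw [heigp, heigm]
    _ = (ν:ℝ) • Pp + (ν:ℝ) • Pm := by
        rw [smul_smul, smul_smul, hs, mul_neg, hs]
        simp [neg_smul, sub_neg_eq_add]
  -- entrywise facts about A
  have hAlt : ∀ p q : Fin (ν+1), p.val < ν → q.val < ν → A p q = 0 := by
    intro p q hp hq; rw [hA, if_neg (by omega)]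
  have hAcr : ∀ p q : Fin (ν+1), p.val < ν → q.val = ν → A p q = 1 ∧ A q p = 1 := by
    intro p q hp hq
    constructor <;> rw [hA, if_pos (by omega)]
  have hAcc : ∀ p q : Fin (ν+1), p.val = ν → q.val = ν → A p q = 0 := by
    intro p q hp hq; rw [hA, if_neg (by omega)]
  -- entrywise facts about A * A
  have hAA1 : ∀ p q : Fin (ν+1), p.val < ν → q.val < ν → (A * A) p q = 1 := by
    intro p q hp hq
    rw [Matrix.mul_apply, Fin.sum_univ_castSucc]
    rw [Finset.sum_eq_zero (fun i _ => by
      rw [hAlt p i.castSucc hp (by simp), zero_mul])]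
    rw [(hAcr p (Fin.last ν) hp rfl).1, (hAcr q (Fin.last ν) hq rfl).2]
    norm_num
  have hAA2 : ∀ p q : Fin (ν+1), p.val < ν → q.val = ν → (A * A) p q = 0 := by
    intro p q hp hq
    rw [Matrix.mul_apply, Fin.sum_univ_castSucc]
    rw [Finset.sum_eq_zero (fun i _ => by
      rw [hAlt p i.castSucc hp (by simp), zero_mul])]
    rw [hAcc (Fin.last ν) q rfl hq]
    norm_num
  have hAA3 : ∀ p q : Fin (ν+1), p.val = ν → q.val = ν → (A * A) p q = ν := by
    intro p q hp hq
    rw [Matrix.mul_apply, Fin.sum_univ_castSucc]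
    rw [Finset.sum_congr rfl (fun i _ => by
      rw [(hAcr i.castSucc p (by simp) hp).2,
          (hAcr i.castSucc q (by simp) hq).1])]
    rw [hAcc p (Fin.last ν) hp rfl]
    simp
  -- per-entry linear equations
  have key : ∀ p q : Fin (ν+1),
      P₀ p q + Pp p q + Pm p q = (if p = q then (1:ℝ) else 0) ∧
      Real.sqrt ν * Pp p q - Real.sqrt ν * Pm p q = A p q ∧
      (ν:ℝ) * Pp p q + (ν:ℝ) * Pm p q = (A * A) p q := by
    intro p q
    refine ⟨?_, ?_, ?_⟩
    · have := congrFun (congrFun hsum p) q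
      simpa [Matrix.add_apply, Matrix.one_apply] using this
    · have := congrFun (congrFun h1 p) q
      simp only [Matrix.sub_apply, Matrix.smul_apply, smul_eq_mul] at this
      linarith
    · have := congrFun (congrFun h2 p) q
      simp only [Matrix.add_apply, Matrix.smul_apply, smul_eq_mul] at this
      linarith
  -- helper: cancel √ν
  have cancel : ∀ x y : ℝ, Real.sqrt ν * x - Real.sqrt ν * y = 0 → x = y := by
    intro x y h
    have h' : Real.sqrt ν * (x - y) = 0 := by rw [mul_sub]; exact h
    rcases mul_eq_zero.mp h' with h'' | h''
    · exact absurd h'' hsne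
    · linarith
  constructor
  · intro p q hp
    refine ⟨?_, ?_, ?_⟩
    · intro hqp; rw [hqp]
      obtain ⟨e1, e2, e3⟩ := key p p
      rw [if_pos rfl] at e1
      rw [hAlt p p hp hp] at e2
      rw [hAA1 p p hp hp] at e3
      have h4 : Pp p p = Pm p p := cancel _ _ e2
      rw [h4] at e3
      have hy : Pm p p = 1 / (2 * ν) := by field_simp; linarith
      have hx : Pp p p = 1 / (2 * ν) := h4.trans hy
      rw [hx, hy] at e1
      have hz : P₀ p p = 1 - 1 / ν := by
        field_simp at e1 ⊢; linarith
      rw [hd, hx, hy, hz]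
      field_simp
      ring
    · intro hq
      obtain ⟨e1, e2, e3⟩ := key p q
      rw [if_neg (by intro h; rw [h] at hp; omega)] at e1
      rw [(hAcr p q hp hq).1] at e2
      rw [hAA2 p q hp hq] at e3
      have hxy : Pp p q + Pm p q = 0 := by
        have h' : (ν:ℝ) * (Pp p q + Pm p q) = 0 := by linarith
        rcases mul_eq_zero.mp h' with h'' | h''
        · exact absurd h'' hνne
        · exact h''
      have hy : Pm p q = -Pp p q := by linarith
      have hz : P₀ p q = 0 := by linarith
      have hsq : (Real.sqrt ν * Pp p q - Real.sqrt ν * Pm p q) ^ 2 = 1 := by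
        rw [e2]; norm_num
      have h' : (ν:ℝ) * (Pp p q - Pm p q) ^ 2 = 1 := by
        rw [← hs]; linear_combination hsq
      rw [hy] at h'
      rw [hd, hz, hy]
      field_simp
      nlinarith [h']
    · intro hq hqp
      obtain ⟨e1, e2, e3⟩ := key p q
      rw [if_neg (fun h => hqp h.symm)] at e1
      rw [hAlt p q hp hq] at e2
      rw [hAA1 p q hp hq] at e3
      have h4 : Pp p q = Pm p q := cancel _ _ e2
      rw [h4] at e3
      have hy : Pm p q = 1 / (2 * ν) := by field_simp; linarith
      have hx : Pp p q = 1 / (2 * ν) := h4.trans hy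
      rw [hx, hy] at e1
      have hz : P₀ p q = -(1 / ν) := by
        field_simp at e1 ⊢; linarith
      rw [hd, hx, hy, hz]
      field_simp
      ring
  · intro p q hp hq
    obtain ⟨e1, e2, e3⟩ := key p q
    have hpq : p = q := Fin.ext (by omega)
    rw [if_pos hpq] at e1
    rw [hAcc p q hp hq] at e2
    rw [hAA3 p q hp hq] at e3
    have h4 : Pp p q = Pm p q := cancel _ _ e2
    rw [h4] at e3
    have hy : Pm p q = 1 / 2 := by
      have h' : (ν:ℝ) * (2 * Pm p q - 1) = 0 := by linarith
      rcases mul_eq_zero.mp h' with h'' | h''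
      · exact absurd h'' hνne
      · linarith
    have hx : Pp p q = 1 / 2 := h4.trans hy
    have hz : P₀ p q = 0 := by rw [hx, hy] at e1; linarith
    rw [hd, hx, hy, hz]
    norm_num
end
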